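/- Summability of the martingale increments: Let {P_k}_{k∈ℕ} and {V_k}_{k∈ℕ} be sequences of real-valued random variables adapted to a filtration {𝓕_k}_{k∈ℕ} on a probability space (Ω, 𝓕, ℙ), with each P_k and V_k integrable, each V_k nonnegative, P_k² ≤ V_k almost surely for every k, and 𝔼[V_{k+1} | 𝓕_k] ≤ α·V_k almost surely for every k, where α ∈ [0, 1). Then Σ_{k=0}^{∞} 𝔼(|P_k − 𝔼[P_{k+1} | 𝓕_k]|) < ∞; in particular 𝔼(Σ_{k=0}^{∞} |P_k − 𝔼[P_{k+1} | 𝓕_k]|) < ∞. -/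

import Mathlib

open MeasureTheory ProbabilityTheory
open scoped ENNReal NNReal

lemma my_integrable_tsum_of_nonneg {Ω : Type*} {m0 : MeasurableSpace Ω} {μ : Measure Ω}
    {f : ℕ → Ω → ℝ} (hint : ∀ k, Integrable (f k) μ) (hnn : ∀ k ω, 0 ≤ f k ω)
    (hsum : Summable fun k => ∫ ω, f k ω ∂μ) :
    Integrable (fun ω => ∑' k, f k ω) μ := by
  set F : Ω → ℝ≥0∞ := fun ω => ∑' k, ENNReal.ofReal (f k ω) with hF
  have hmeas : ∀ k, AEMeasurable (fun ω => ENNReal.ofReal (f k ω)) μ :=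
    fun k => (hint k).aemeasurable.ennreal_ofReal
  have hFmeas : AEMeasurable F μ := AEMeasurable.ennreal_tsum hmeas
  have hlint : ∫⁻ ω, F ω ∂μ = ENNReal.ofReal (∑' k, ∫ ω, f k ω ∂μ) := by
    rw [lintegral_tsum hmeas,
      ENNReal.ofReal_tsum_of_nonneg (fun k => integral_nonneg (hnn k)) hsum]
    congr 1
    ext k
    rw [← ofReal_integral_eq_lintegral_ofReal (hint k) (Filter.Eventually.of_forall (hnn k))]
  have hfin : ∫⁻ ω, F ω ∂μ ≠ ⊤ := by rw [hlint]; exact ENNReal.ofReal_ne_top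
  have haefin : ∀ᵐ ω ∂μ, F ω ≠ ⊤ := (ae_lt_top' hFmeas hfin).mono fun ω h => h.ne
  refine (integrable_toReal_of_lintegral_ne_top hFmeas hfin).congr ?_
  filter_upwards [haefin] with ω hω
  have hsumm : Summable fun k => f k ω := by
    refine (ENNReal.summable_toReal hω).congr fun k => ?_
    exact ENNReal.toReal_ofReal (hnn k ω)
  calc (F ω).toReal = (ENNReal.ofReal (∑' k, f k ω)).toReal := by
        rw [hF, ENNReal.ofReal_tsum_of_nonneg (fun k => hnn k ω) hsumm]
    _ = ∑' k, f k ω := ENNReal.toReal_ofReal (tsum_nonneg fun k => hnn k ω)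


/-- Summability of the martingale increments: under the geometric persistence hypotheses,
`∑ₖ 𝔼(|P k - 𝔼[P (k+1) | ℱ k]|) < ∞`, and in particular
`∑ₖ |P k - 𝔼[P (k+1) | ℱ k]|` is integrable. -/
theorem summable_martingale_increments
    {Ω : Type*} {m0 : MeasurableSpace Ω} {μ : Measure Ω} [IsProbabilityMeasure μ]
    {ℱ : Filtration ℕ m0} {P V : ℕ → Ω → ℝ}
    (hPadapted : Adapted ℱ P) (hVadapted : Adapted ℱ V)
    (hPint : ∀ k, Integrable (P k) μ)
    (hVnn : ∀ k, ∀ᵐ ω ∂μ, 0 ≤ V k ω) (hVint : ∀ k, Integrable (V k) μ)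
    (hPV : ∀ k, ∀ᵐ ω ∂μ, (P k ω) ^ 2 ≤ V k ω)
    {α : ℝ} (hα : α ∈ Set.Ico (0 : ℝ) 1)
    (hdec : ∀ k, ∀ᵐ ω ∂μ, (μ[V (k + 1) | ℱ k]) ω ≤ α * V k ω) :
    Summable (fun k => ∫ ω, |P k ω - (μ[P (k + 1) | ℱ k]) ω| ∂μ) ∧
      Integrable (fun ω => ∑' k, |P k ω - (μ[P (k + 1) | ℱ k]) ω|) μ := by
  have hsumm : Summable (fun k => ∫ ω, |P k ω - (μ[P (k + 1) | ℱ k]) ω| ∂μ) := by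
    obtain ⟨hα0, hα1⟩ := hα
    -- expectations of V decay geometrically
    have hV0nn : (0:ℝ) ≤ ∫ ω, V 0 ω ∂μ := integral_nonneg_of_ae (hVnn 0)
    have hVexp : ∀ k, ∫ ω, V k ω ∂μ ≤ α ^ k * ∫ ω, V 0 ω ∂μ := by
      intro k
      induction k with
      | zero => simp
      | succ k ih =>
        have h1 : ∫ ω, V (k+1) ω ∂μ = ∫ ω, (μ[V (k+1) | ℱ k]) ω ∂μ :=
          (integral_condExp (ℱ.le k)).symm
        have h2 : ∫ ω, (μ[V (k+1) | ℱ k]) ω ∂μ ≤ ∫ ω, α * V k ω ∂μ :=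
          integral_mono_ae integrable_condExp ((hVint k).const_mul α) (hdec k)
        calc ∫ ω, V (k+1) ω ∂μ ≤ ∫ ω, α * V k ω ∂μ := h1 ▸ h2
          _ = α * ∫ ω, V k ω ∂μ := integral_const_mul α _
          _ ≤ α * (α ^ k * ∫ ω, V 0 ω ∂μ) := mul_le_mul_of_nonneg_left ih hα0
          _ = α ^ (k+1) * ∫ ω, V 0 ω ∂μ := by ring
    -- P k ^ 2 is integrable
    have hP2int : ∀ k, Integrable (fun ω => P k ω ^ 2) μ := by
      intro k
      refine (hVint k).mono (((hPint k).aestronglyMeasurable.mul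
        (hPint k).aestronglyMeasurable).congr ?_) ?_
      · exact Filter.Eventually.of_forall fun ω => (sq (P k ω)).symm
      · filter_upwards [hPV k, hVnn k] with ω h1 h2
        rw [Real.norm_eq_abs, Real.norm_eq_abs, abs_of_nonneg (sq_nonneg _), abs_of_nonneg h2]
        exact h1
    set s : ℝ := Real.sqrt α with hs
    have hs0 : 0 ≤ s := Real.sqrt_nonneg α
    have hs1 : s < 1 := by
      rw [hs, show (1:ℝ) = Real.sqrt 1 by simp]
      exact Real.sqrt_lt_sqrt hα0 hα1
    have hsp : ∀ k : ℕ, Real.sqrt (α ^ k) = s ^ k := by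
      intro k
      induction k with
      | zero => simp
      | succ k ih => rw [pow_succ, pow_succ, Real.sqrt_mul (pow_nonneg hα0 k), ih]
    have habs2 : ∀ x : ℝ, |x| ^ (2:ℝ) = x ^ 2 := fun x => by
      rw [show ((2:ℝ) = ((2:ℕ):ℝ)) by norm_num, Real.rpow_natCast, sq_abs]
    set C : ℝ := Real.sqrt (∫ ω, V 0 ω ∂μ) with hC
    have hCnn : 0 ≤ C := Real.sqrt_nonneg _
    -- L¹-norm of P k is bounded by C * s ^ k
    have hb : ∀ k, ∫ ω, |P k ω| ∂μ ≤ C * s ^ k := by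
      intro k
      have hconj : (2:ℝ).HolderConjugate 2 := Real.HolderConjugate.two_two
      have hmem : MemLp (fun ω => |P k ω|) (ENNReal.ofReal 2) μ := by
        rw [show ENNReal.ofReal 2 = 2 by norm_num]
        refine (memLp_two_iff_integrable_sq (hPint k).abs.aestronglyMeasurable).2 ?_
        exact (hP2int k).congr (Filter.Eventually.of_forall fun ω => (sq_abs (P k ω)).symm)
      have hmem1 : MemLp (fun _ : Ω => (1:ℝ)) (ENNReal.ofReal 2) μ := memLp_const 1
      have hcs := integral_mul_le_Lp_mul_Lq_of_nonneg hconj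
        (Filter.Eventually.of_forall fun ω => abs_nonneg (P k ω))
        (Filter.Eventually.of_forall fun _ => zero_le_one) hmem hmem1
      simp only [mul_one, Real.one_rpow, integral_const, measure_univ, probReal_univ, ENNReal.toReal_one,
        smul_eq_mul, one_mul] at hcs
      have h2 : ∫ ω, |P k ω| ^ (2:ℝ) ∂μ ≤ ∫ ω, V k ω ∂μ := by
        refine integral_mono_ae ?_ (hVint k) ?_
        · refine (hP2int k).congr (Filter.Eventually.of_forall fun ω => ?_)
          simp only [habs2]
        · filter_upwards [hPV k] with ω h
          simpa only [habs2] using h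
      calc ∫ ω, |P k ω| ∂μ ≤ (∫ ω, |P k ω| ^ (2:ℝ) ∂μ) ^ (1/2 : ℝ) := hcs
        _ = Real.sqrt (∫ ω, |P k ω| ^ (2:ℝ) ∂μ) := (Real.sqrt_eq_rpow _).symm
        _ ≤ Real.sqrt (∫ ω, V k ω ∂μ) := Real.sqrt_le_sqrt h2
        _ ≤ Real.sqrt (α ^ k * ∫ ω, V 0 ω ∂μ) := Real.sqrt_le_sqrt (hVexp k)
        _ = Real.sqrt (α ^ k) * C := Real.sqrt_mul (pow_nonneg hα0 k) _
        _ = C * s ^ k := by rw [hsp k, mul_comm]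
    have hterm : ∀ k, ∫ ω, |P k ω - (μ[P (k + 1) | ℱ k]) ω| ∂μ ≤ (C + C * s) * s ^ k := by
      intro k
      have hint1 : Integrable (fun ω => |P k ω| + |(μ[P (k + 1) | ℱ k]) ω|) μ :=
        (hPint k).abs.add integrable_condExp.abs
      have h3 : ∫ ω, |(μ[P (k + 1) | ℱ k]) ω| ∂μ ≤ ∫ ω, |P (k+1) ω| ∂μ :=
        integral_abs_condExp_le _
      calc ∫ ω, |P k ω - (μ[P (k + 1) | ℱ k]) ω| ∂μ
          ≤ ∫ ω, (|P k ω| + |(μ[P (k + 1) | ℱ k]) ω|) ∂μ :=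
            integral_mono ((hPint k).sub integrable_condExp).abs hint1 fun ω => abs_sub _ _
        _ = ∫ ω, |P k ω| ∂μ + ∫ ω, |(μ[P (k + 1) | ℱ k]) ω| ∂μ :=
            integral_add (hPint k).abs integrable_condExp.abs
        _ ≤ C * s ^ k + C * s ^ (k+1) := add_le_add (hb k) (h3.trans (hb (k+1)))
        _ = (C + C * s) * s ^ k := by ring
    exact Summable.of_nonneg_of_le (fun k => integral_nonneg fun ω => abs_nonneg _) hterm
      ((summable_geometric_of_lt_one hs0 hs1).mul_left _)
  refine ⟨hsumm, ?_⟩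
  exact my_integrable_tsum_of_nonneg
    (fun k => ((hPint k).sub integrable_condExp).abs)
    (fun k ω => abs_nonneg _) hsumm
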